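/- Let (x(·), λ(·)) be a trajectory of the algorithm, let (x*, λ*) satisfy the optimality conditions, and let k satisfy 0 < k < 1/(α λ_max(L_n)), where λ_max(L_n) is the largest eigenvalue of L_n. Then there exists a symmetric positive definite matrix Q ∈ ℝ^{nq×nq} such that for almost every t ≥ 0 the real function t ↦ V*(x(t), λ(t)), where V* = V₁* + k V₂*, is differentiable at t and d/dt V*(x(t), λ(t)) ≤ −k‖ẋ(t)‖² − ⟨λ̇(t), Q λ̇(t)⟩ ≤ 0. -/

import Mathlib

open Matrix MeasureTheory Filter

noncomputable section

variable {E : Type*} [NormedAddCommGroup E] [InnerProductSpace ℝ E]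

/-- Subdifferential of a real-valued function. -/
def subdiff (h : E → ℝ) (x : E) : Set E :=
  {g | ∀ y, h x + (inner ℝ g (y - x) : ℝ) ≤ h y}

/-- Normal cone of a set `K` at `x`. -/
def normalCone (K : Set E) (x : E) : Set E :=
  {d | ∀ y ∈ K, (inner ℝ d (y - x) : ℝ) ≤ 0}

/-- Tangent cone of a set `K` at `x`. -/
def tangentCone (K : Set E) (x : E) : Set E :=
  closure {d | ∃ t : ℝ, 0 < t ∧ x + t • d ∈ K}

/-- `p` is the metric projection of `u` onto `K`. -/
def IsProjOn (K : Set E) (u p : E) : Prop :=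
  p ∈ K ∧ ∀ v ∈ K, ‖u - p‖ ≤ ‖u - v‖

/-- Local absolute continuity on `[0, ∞)`. -/
def LocAC {F : Type*} [NormedAddCommGroup F] [NormedSpace ℝ F] [CompleteSpace F]
    (φ : ℝ → F) : Prop :=
  (∀ᵐ t ∂(volume.restrict (Set.Ici (0:ℝ))), DifferentiableAt ℝ φ t) ∧
  LocallyIntegrableOn (deriv φ) (Set.Ici 0) volume ∧
  ∀ s t : ℝ, 0 ≤ s → s ≤ t → φ t - φ s = ∫ τ in s..t, deriv φ τ

/-- Weighted Laplacian matrix. -/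
def lap (n : ℕ) (a : Fin n → Fin n → ℝ) : Matrix (Fin n) (Fin n) ℝ :=
  Matrix.of fun i j => if i = j then ∑ k ∈ Finset.univ.erase i, a i k else - a i j

/-- `L = Lₙ ⊗ I_q`. -/
def bigL (n q : ℕ) (a : Fin n → Fin n → ℝ) :
    Matrix (Fin n × Fin q) (Fin n × Fin q) ℝ :=
  Matrix.kroneckerMap (· * ·) (lap n a) (1 : Matrix (Fin q) (Fin q) ℝ)

/-- `L` as a linear map on Euclidean space. -/
def Lmap (n q : ℕ) (a : Fin n → Fin n → ℝ) :
    EuclideanSpace ℝ (Fin n × Fin q) →ₗ[ℝ] EuclideanSpace ℝ (Fin n × Fin q) :=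
  Matrix.toEuclideanLin (bigL n q a)

/-- `i`-th block of a stacked vector. -/
def blk {n q : ℕ} (x : EuclideanSpace ℝ (Fin n × Fin q)) (i : Fin n) :
    EuclideanSpace ℝ (Fin q) := WithLp.toLp 2 (fun j => x (i, j))

/-- The product constraint set `Ω = Ω₁ × ⋯ × Ωₙ`. -/
def prodSet (n q : ℕ) (Ω : Fin n → Set (EuclideanSpace ℝ (Fin q))) :
    Set (EuclideanSpace ℝ (Fin n × Fin q)) :=
  {x | ∀ i, blk x i ∈ Ω i}

/-- `𝐟(𝐱) = ∑ᵢ fⁱ(xᵢ)`. -/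
def bigF (n q : ℕ) (f : Fin n → EuclideanSpace ℝ (Fin q) → ℝ)
    (x : EuclideanSpace ℝ (Fin n × Fin q)) : ℝ :=
  ∑ i, f i (blk x i)

/-- `1ₙ ⊗ v`. -/
def oneTensor (n q : ℕ) (v : EuclideanSpace ℝ (Fin q)) :
    EuclideanSpace ℝ (Fin n × Fin q) := WithLp.toLp 2 (fun (p : Fin n × Fin q) => v p.2)


/-- `V₁*(𝐱, λ) = ½‖𝐱 − x*‖² + ½‖λ − λ*‖²`. -/
def V1aux (xs lams u v : E) : ℝ :=
  (1/2) * ‖u - xs‖^2 + (1/2) * ‖v - lams‖^2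

/-- `V₂*(𝐱, λ) = 𝐟(𝐱) − 𝐟(x*) + (α/2)⟨𝐱, L𝐱⟩ + α⟨𝐱, Lλ⟩`. -/
def V2aux (n q : ℕ) (α : ℝ) (a : Fin n → Fin n → ℝ)
    (f : Fin n → EuclideanSpace ℝ (Fin q) → ℝ)
    (xs u v : EuclideanSpace ℝ (Fin n × Fin q)) : ℝ :=
  bigF n q f u - bigF n q f xs + (α/2) * (inner ℝ u (Lmap n q a u) : ℝ) +
    α * (inner ℝ u (Lmap n q a v) : ℝ)


-- ======================= auxiliary lemmas =======================

section MatrixLemmas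
variable {n q : ℕ} {a : Fin n → Fin n → ℝ}

theorem lap_mulVec (hdiag : ∀ i, a i i = 0) (v : Fin n → ℝ) (i : Fin n) :
    (lap n a).mulVec v i = ∑ k, a i k * (v i - v k) := by
  have hsplit : (lap n a).mulVec v i
      = (∑ k ∈ Finset.univ.erase i, a i k) * v i + ∑ k ∈ Finset.univ.erase i, -(a i k * v k) := by
    simp only [Matrix.mulVec, dotProduct, lap, Matrix.of_apply]
    rw [← Finset.add_sum_erase _ _ (Finset.mem_univ i), if_pos rfl]
    congr 1
    refine Finset.sum_congr rfl fun k hk => ?_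
    rw [if_neg (Finset.ne_of_mem_erase hk).symm]; ring
  have hR : ∑ k, a i k * (v i - v k) = ∑ k ∈ Finset.univ.erase i, a i k * (v i - v k) := by
    rw [← Finset.add_sum_erase _ (fun k => a i k * (v i - v k)) (Finset.mem_univ i), hdiag i]
    ring
  rw [hsplit, hR, Finset.sum_mul, ← Finset.sum_add_distrib]
  refine Finset.sum_congr rfl fun k _ => ?_
  ring

theorem lap_qf (hsymm : ∀ i j, a i j = a j i) (hdiag : ∀ i, a i i = 0) (v : Fin n → ℝ) :
    ∑ i, v i * (lap n a).mulVec v i = (1/2) * ∑ i, ∑ k, a i k * (v i - v k)^2 := by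
  have key : ∑ i, v i * (lap n a).mulVec v i
      = ∑ i, ∑ k, a i k * (v i * (v i - v k)) := by
    simp only [lap_mulVec hdiag]
    congr 1; ext i
    rw [Finset.mul_sum]; congr 1; ext k; ring
  have swap : ∑ i, ∑ k, a i k * (v i * (v i - v k))
      = ∑ i, ∑ k, a i k * (v k * (v k - v i)) := by
    rw [Finset.sum_comm]
    congr 1; ext i; congr 1; ext k; rw [hsymm i k]
  have h2 : (2:ℝ) * ∑ i, ∑ k, a i k * (v i * (v i - v k))
      = ∑ i, ∑ k, a i k * (v i - v k)^2 := by
    rw [two_mul]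
    nth_rewrite 2 [swap]
    rw [← Finset.sum_add_distrib]
    congr 1; ext i
    rw [← Finset.sum_add_distrib]
    congr 1; ext k; ring
  rw [key]; linarith

theorem lap_qf_nonneg (hsymm : ∀ i j, a i j = a j i) (hnn : ∀ i j, 0 ≤ a i j)
    (hdiag : ∀ i, a i i = 0) (v : Fin n → ℝ) :
    0 ≤ ∑ i, v i * (lap n a).mulVec v i := by
  rw [lap_qf hsymm hdiag]
  have h : (0:ℝ) ≤ ∑ i, ∑ k, a i k * (v i - v k)^2 :=
    Finset.sum_nonneg fun i _ => Finset.sum_nonneg fun k _ =>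
      mul_nonneg (hnn i k) (sq_nonneg _)
  linarith

theorem bigL_mulVec (u : Fin n × Fin q → ℝ) (i : Fin n) (j : Fin q) :
    (bigL n q a).mulVec u (i, j) = (lap n a).mulVec (fun i' => u (i', j)) i := by
  simp only [Matrix.mulVec, dotProduct, bigL, Matrix.kroneckerMap_apply]
  rw [← Finset.univ_product_univ, Finset.sum_product]
  congr 1; ext i'
  rw [Finset.sum_eq_single j]
  · simp
  · intro j' _ hj'
    rw [Matrix.one_apply_ne (Ne.symm hj')]; ring
  · intro h; exact absurd (Finset.mem_univ j) h

theorem bigL_isSymm (hsymm : ∀ i j, a i j = a j i) : (bigL n q a).IsSymm := by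
  apply Matrix.IsSymm.ext
  rintro ⟨i, j⟩ ⟨i', j'⟩
  simp only [bigL, Matrix.kroneckerMap_apply, lap, Matrix.of_apply]
  by_cases h : i = i' <;> by_cases h2 : j = j' <;>
    simp [h, h2, Matrix.one_apply, hsymm i i', eq_comm]

theorem esp_inner {ι : Type*} [Fintype ι] (u v : EuclideanSpace ℝ ι) :
    (inner ℝ u v : ℝ) = ∑ i, u i * v i := by
  simp [PiLp.inner_apply, RCLike.inner_apply, mul_comm]

theorem Lmap_apply (u : EuclideanSpace ℝ (Fin n × Fin q)) (i : Fin n) (j : Fin q) :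
    Lmap n q a u (i, j) = (lap n a).mulVec (fun i' => u (i', j)) i := by
  rw [Lmap, Matrix.toEuclideanLin_apply]
  exact bigL_mulVec _ i j

theorem Lmap_isSymmetric (hsymm : ∀ i j, a i j = a j i) :
    (Lmap n q a).IsSymmetric := by
  rw [Lmap, ← Matrix.isHermitian_iff_isSymmetric]
  rw [Matrix.IsHermitian, Matrix.conjTranspose]
  have := (bigL_isSymm (q := q) hsymm).eq
  rw [this]; ext i j; simp

theorem Lmap_psd (hsymm : ∀ i j, a i j = a j i) (hnn : ∀ i j, 0 ≤ a i j)
    (hdiag : ∀ i, a i i = 0) (u : EuclideanSpace ℝ (Fin n × Fin q)) :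
    0 ≤ (inner ℝ u (Lmap n q a u) : ℝ) := by
  rw [esp_inner]
  have h : ∀ p : Fin n × Fin q, u p * Lmap n q a u p
      = u (p.1, p.2) * (lap n a).mulVec (fun i' => u (i', p.2)) p.1 := by
    rintro ⟨i, j⟩; rw [Lmap_apply]
  rw [Finset.sum_congr rfl fun p _ => h p]
  rw [← Finset.univ_product_univ, Finset.sum_product]
  rw [Finset.sum_comm]
  exact Finset.sum_nonneg fun j _ => lap_qf_nonneg hsymm hnn hdiag _

theorem Lmap_eig_le (hsymm : ∀ i j, a i j = a j i) (hnn : ∀ i j, 0 ≤ a i j)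
    (hdiag : ∀ i, a i i = 0) {μ : ℝ}
    (hμmax : ∀ μ' : ℝ, (∃ v : Fin n → ℝ, v ≠ 0 ∧ (lap n a).mulVec v = μ' • v) → μ' ≤ μ)
    (u : EuclideanSpace ℝ (Fin n × Fin q)) :
    (inner ℝ (Lmap n q a u) (Lmap n q a u) : ℝ) ≤ μ * (inner ℝ u (Lmap n q a u) : ℝ) := by
  set T := Lmap n q a with hT
  have hsym : T.IsSymmetric := Lmap_isSymmetric hsymm
  have hrank : Module.finrank ℝ (EuclideanSpace ℝ (Fin n × Fin q))
      = Fintype.card (Fin n × Fin q) := finrank_euclideanSpace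
  set B := hsym.eigenvectorBasis hrank with hB
  set ev := hsym.eigenvalues hrank with hev
  have heig : ∀ i, T (B i) = ev i • B i := fun i =>
    (hsym.hasEigenvector_eigenvectorBasis hrank i).apply_eq_smul
  have hBne : ∀ i, B i ≠ 0 := fun i =>
    (hsym.hasEigenvector_eigenvectorBasis hrank i).right
  have hev_nonneg : ∀ i, 0 ≤ ev i := by
    intro i
    have h1 : (inner ℝ (B i) (T (B i)) : ℝ) = ev i * ‖B i‖^2 := by
      rw [heig i, real_inner_smul_right, real_inner_self_eq_norm_sq]
    have h2 := Lmap_psd hsymm hnn hdiag (B i)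
    rw [← hT] at h2
    have h3 : (0:ℝ) < ‖B i‖^2 := by
      have := norm_pos_iff.mpr (hBne i)
      positivity
    nlinarith [h1 ▸ h2]
  have hev_le : ∀ i, ev i ≤ μ := by
    intro i
    have hb := heig i
    have hbne := hBne i
    have hcol : ∃ p : Fin n × Fin q, B i p ≠ 0 := by
      by_contra h
      push_neg at h
      exact hbne (by ext p; simpa using h p)
    obtain ⟨⟨i0, j0⟩, hp⟩ := hcol
    refine hμmax (ev i) ⟨fun i' => B i (i', j0), ?_, ?_⟩
    · intro h
      exact hp (congrFun h i0)
    · funext i'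
      have h1 : T (B i) (i', j0) = (ev i • B i) (i', j0) := by rw [hb]
      rw [hT, Lmap_apply] at h1
      simpa using h1
  have expand1 : (inner ℝ (T u) (T u) : ℝ) = ∑ i, ev i ^ 2 * (inner ℝ u (B i) : ℝ)^2 := by
    rw [← B.sum_inner_mul_inner (T u) (T u)]
    refine Finset.sum_congr rfl fun i _ => ?_
    have hL : (inner ℝ (T u) (B i) : ℝ) = ev i * (inner ℝ u (B i) : ℝ) := by
      rw [hsym u (B i), heig i, real_inner_smul_right]
    have hR : (inner ℝ (B i) (T u) : ℝ) = ev i * (inner ℝ u (B i) : ℝ) := by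
      calc (inner ℝ (B i) (T u) : ℝ) = inner ℝ (T (B i)) u := (hsym (B i) u).symm
        _ = inner ℝ (ev i • B i) u := by rw [heig]
        _ = ev i * (inner ℝ (B i) u : ℝ) := real_inner_smul_left _ _ _
        _ = ev i * (inner ℝ u (B i) : ℝ) := by rw [real_inner_comm]
    rw [hL, hR]; ring
  have expand2 : (inner ℝ u (T u) : ℝ) = ∑ i, ev i * (inner ℝ u (B i) : ℝ)^2 := by
    rw [← B.sum_inner_mul_inner u (T u)]
    refine Finset.sum_congr rfl fun i _ => ?_
    have hR : (inner ℝ (B i) (T u) : ℝ) = ev i * (inner ℝ u (B i) : ℝ) := by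
      calc (inner ℝ (B i) (T u) : ℝ) = inner ℝ (T (B i)) u := (hsym (B i) u).symm
        _ = inner ℝ (ev i • B i) u := by rw [heig]
        _ = ev i * (inner ℝ (B i) u : ℝ) := real_inner_smul_left _ _ _
        _ = ev i * (inner ℝ u (B i) : ℝ) := by rw [real_inner_comm]
    rw [hR]; ring
  rw [expand1, expand2, Finset.mul_sum]
  refine Finset.sum_le_sum fun i _ => ?_
  have h0 := hev_nonneg i
  have h1 := hev_le i
  have key := mul_le_mul_of_nonneg_right h1 (mul_nonneg h0 (sq_nonneg (inner ℝ u (B i) : ℝ)))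
  nlinarith [key]

end MatrixLemmas

section ConeLemmas

theorem isProjOn_inner_le {K : Set E} (hK : Convex ℝ K) {u p : E} (h : IsProjOn K u p) :
    ∀ v ∈ K, (inner ℝ (u - p) (v - p) : ℝ) ≤ 0 := by
  have hmem := h.1
  have heq : ‖u - p‖ = ⨅ w : K, ‖u - w‖ := by
    haveI : Nonempty K := ⟨⟨p, hmem⟩⟩
    refine le_antisymm (le_ciInf fun w => h.2 w w.2) (ciInf_le (⟨0, ?_⟩ : BddBelow _) (⟨p, hmem⟩ : K))
    rintro _ ⟨w, rfl⟩
    exact norm_nonneg _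
  exact (norm_eq_iInf_iff_real_inner_le_zero hK hmem).1 heq

theorem preCone_convex {K : Set E} (hK : Convex ℝ K) (x : E) :
    Convex ℝ {d : E | ∃ t : ℝ, 0 < t ∧ x + t • d ∈ K} := by
  rintro d₁ ⟨t₁, ht₁, h₁⟩ d₂ ⟨t₂, ht₂, h₂⟩ s r hs hr hsr
  rcases eq_or_lt_of_le hs with hs0 | hs0
  · refine ⟨t₂, ht₂, ?_⟩
    have hr1 : r = 1 := by linarith
    simpa [← hs0, hr1] using h₂
  rcases eq_or_lt_of_le hr with hr0 | hr0
  · refine ⟨t₁, ht₁, ?_⟩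
    have hs1 : s = 1 := by linarith
    simpa [← hr0, hs1] using h₁
  refine ⟨(s/t₁ + r/t₂)⁻¹, by positivity, ?_⟩
  set t := (s/t₁ + r/t₂)⁻¹ with htdef
  have htpos : 0 < t := by positivity
  have hts : t * (s/t₁ + r/t₂) = 1 := by
    rw [htdef]; field_simp
  have hkey : x + t • (s • d₁ + r • d₂)
      = (t*s/t₁) • (x + t₁ • d₁) + (t*r/t₂) • (x + t₂ • d₂) := by
    have ht₁' : t₁ ≠ 0 := ne_of_gt ht₁
    have ht₂' : t₂ ≠ 0 := ne_of_gt ht₂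
    have hx : t*s/t₁ + t*r/t₂ = 1 := by
      field_simp at hts ⊢
      linarith [hts]
    match_scalars
    · linarith [hx]
    · field_simp
    · field_simp
  rw [hkey]
  refine hK h₁ h₂ (by positivity) (by positivity) ?_
  field_simp at hts ⊢
  linarith [hts]

theorem tangentCone_convex {K : Set E} (hK : Convex ℝ K) (x : E) :
    Convex ℝ (tangentCone K x) := (preCone_convex hK x).closure

theorem sub_mem_tangentCone {K : Set E} {x y : E} (hy : y ∈ K) :
    y - x ∈ tangentCone K x :=
  subset_closure ⟨1, one_pos, by simpa using hy⟩

theorem zero_mem_tangentCone' {K : Set E} {x : E} (hx : x ∈ K) :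
    (0:E) ∈ tangentCone K x :=
  subset_closure ⟨1, one_pos, by simpa using hx⟩

theorem smul_mem_tangentCone {K : Set E} {x p : E} {c : ℝ} (hc : 0 < c)
    (hp : p ∈ tangentCone K x) : c • p ∈ tangentCone K x := by
  refine map_mem_closure (continuous_const_smul c) hp ?_
  rintro d ⟨t, ht, hd⟩
  exact ⟨t / c, by positivity, by rwa [smul_smul, div_mul_cancel₀ _ (ne_of_gt hc)]⟩

theorem isProjOn_tangentCone_facts {K : Set E} (hK : Convex ℝ K) {x u p : E}
    (hx : x ∈ K) (h : IsProjOn (tangentCone K x) u p) :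
    (inner ℝ (u - p) p : ℝ) = 0 ∧ ∀ v ∈ tangentCone K x, (inner ℝ (u - p) v : ℝ) ≤ 0 := by
  have hVI := isProjOn_inner_le (tangentCone_convex hK x) h
  have hp := h.1
  have h0 : (inner ℝ (u - p) (0 - p) : ℝ) ≤ 0 := hVI 0 (zero_mem_tangentCone' hx)
  have h2 : (inner ℝ (u - p) ((2:ℝ) • p - p) : ℝ) ≤ 0 := hVI _ (smul_mem_tangentCone two_pos hp)
  have e0 : (inner ℝ (u - p) (0 - p) : ℝ) = -(inner ℝ (u - p) p : ℝ) := by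
    rw [zero_sub, inner_neg_right]
  have e2 : (inner ℝ (u - p) ((2:ℝ) • p - p) : ℝ) = (inner ℝ (u - p) p : ℝ) := by
    have h22 : (2:ℝ) • p - p = p := by module
    rw [h22]
  have hz : (inner ℝ (u - p) p : ℝ) = 0 := by rw [e0] at h0; rw [e2] at h2; linarith
  refine ⟨hz, fun v hv => ?_⟩
  have h3 := hVI v hv
  rw [inner_sub_right, hz, sub_zero] at h3
  exact h3

end ConeLemmas

section BigFLemmas
variable {n q : ℕ} {f : Fin n → EuclideanSpace ℝ (Fin q) → ℝ}

theorem blk_add' (x y : EuclideanSpace ℝ (Fin n × Fin q)) (i : Fin n) :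
    blk (x + y) i = blk x i + blk y i := by ext j; simp [blk]

theorem blk_smul' (c : ℝ) (x : EuclideanSpace ℝ (Fin n × Fin q)) (i : Fin n) :
    blk (c • x) i = c • blk x i := by ext j; simp [blk]

def blkL (n q : ℕ) (i : Fin n) :
    EuclideanSpace ℝ (Fin n × Fin q) →ₗ[ℝ] EuclideanSpace ℝ (Fin q) where
  toFun x := blk x i
  map_add' _ _ := blk_add' _ _ _
  map_smul' _ _ := blk_smul' _ _ _

theorem bigF_convexOn (hfconv : ∀ i, ConvexOn ℝ Set.univ (f i)) :
    ConvexOn ℝ Set.univ (bigF n q f) := by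
  refine ⟨convex_univ, fun x _ y _ s r hs hr hsr => ?_⟩
  simp only [bigF]
  calc ∑ i, f i (blk (s • x + r • y) i)
      = ∑ i, f i (s • blk x i + r • blk y i) := by
        refine Finset.sum_congr rfl fun i _ => ?_
        rw [blk_add', blk_smul', blk_smul']
    _ ≤ ∑ i, (s * f i (blk x i) + r * f i (blk y i)) :=
        Finset.sum_le_sum fun i _ =>
          (hfconv i).2 (Set.mem_univ _) (Set.mem_univ _) hs hr hsr
    _ = s • ∑ i, f i (blk x i) + r • ∑ i, f i (blk y i) := by
        rw [Finset.sum_add_distrib, ← Finset.mul_sum, ← Finset.mul_sum]; rfl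

theorem bigF_continuous (hfcont : ∀ i, Continuous (f i)) :
    Continuous (bigF n q f) := by
  refine continuous_finset_sum _ fun i _ => (hfcont i).comp ?_
  exact (blkL n q i).continuous_of_finiteDimensional

theorem bigF_exists_lipschitz (hfconv : ∀ i, ConvexOn ℝ Set.univ (f i))
    (hfcont : ∀ i, Continuous (f i)) (x₀ : EuclideanSpace ℝ (Fin n × Fin q)) (R : ℝ) :
    ∃ K : NNReal, LipschitzOnWith K (bigF n q f) (Metric.ball x₀ R) := by
  have hcv : ConvexOn ℝ (Metric.ball x₀ (R + 1)) (bigF n q f) :=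
    (bigF_convexOn hfconv).subset (Set.subset_univ _) (convex_ball _ _)
  refine hcv.exists_lipschitzOnWith_of_isBounded (lt_add_one R) ?_
  have hcomp : IsCompact (bigF n q f '' Metric.closedBall x₀ (R + 1)) :=
    (isCompact_closedBall _ _).image (bigF_continuous hfcont)
  exact Bornology.IsBounded.subset hcomp.isBounded
    (Set.image_mono Metric.ball_subset_closedBall)

end BigFLemmas

section AEDiff

theorem comp_ae_differentiable
    (F : E → ℝ) (hF : ∀ (x₀ : E) (R : ℝ), ∃ K : NNReal, LipschitzOnWith K F (Metric.ball x₀ R))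
    (x : ℝ → E)
    (hloc : LocallyIntegrableOn (deriv x) (Set.Ici 0) volume)
    (hint : ∀ s t : ℝ, 0 ≤ s → s ≤ t → x t - x s = ∫ τ in s..t, deriv x τ) :
    ∀ᵐ t ∂(volume : Measure ℝ), t ∈ Set.Ioi (0:ℝ) →
      DifferentiableAt ℝ (fun τ => F (x τ)) t := by
  set φ : ℝ → ℝ := fun τ => F (x τ) with hφ
  have good : ∀ N : ℕ, ∀ᵐ t ∂(volume : Measure ℝ),
      t ∈ Set.Ioo (0:ℝ) N → DifferentiableAt ℝ φ t := by
    intro N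
    have hNnn : (0:ℝ) ≤ N := Nat.cast_nonneg N
    have hInt : IntegrableOn (deriv x) (Set.Icc (0:ℝ) N) volume :=
      hloc.integrableOn_compact_subset (fun τ hτ => hτ.1) isCompact_Icc
    have hIntSub : ∀ s t : ℝ, 0 ≤ s → t ≤ N → s ≤ t →
        IntervalIntegrable (deriv x) volume s t := by
      intro s t hs htN hst
      rw [intervalIntegrable_iff_integrableOn_Icc_of_le hst]
      exact hInt.mono_set (Set.Icc_subset_Icc hs htN)
    have hbd : ∀ s t : ℝ, 0 ≤ s → t ≤ N → s ≤ t →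
        ‖x t - x s‖ ≤ ∫ τ in s..t, ‖deriv x τ‖ := by
      intro s t hs htN hst
      rw [hint s t hs hst]
      exact intervalIntegral.norm_integral_le_integral_norm hst
    set I : ℝ → ℝ := fun t => ∫ τ in (0:ℝ)..t, ‖deriv x τ‖ with hI
    have hIseg : ∀ s t : ℝ, 0 ≤ s → t ≤ N → s ≤ t →
        I t - I s = ∫ τ in s..t, ‖deriv x τ‖ := by
      intro s t hs htN hst
      have h1 : I s + ∫ τ in s..t, ‖deriv x τ‖ = I t :=
        intervalIntegral.integral_add_adjacent_intervals
          ((hIntSub 0 s le_rfl (le_trans hst htN) hs).norm)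
          ((hIntSub s t hs htN hst).norm)
      linarith
    have hImono : ∀ s t : ℝ, 0 ≤ s → t ≤ N → s ≤ t → I s ≤ I t := by
      intro s t hs htN hst
      have h2 : (0:ℝ) ≤ ∫ τ in s..t, ‖deriv x τ‖ :=
        intervalIntegral.integral_nonneg hst fun τ _ => norm_nonneg _
      linarith [hIseg s t hs htN hst]
    have hI0 : I 0 = 0 := intervalIntegral.integral_same
    have hrange : ∀ t : ℝ, 0 ≤ t → t ≤ N → x t ∈ Metric.ball (x 0) (I N + 1) := by
      intro t ht htN
      have h1 := hbd 0 t le_rfl htN ht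
      have h2 := hImono t N ht le_rfl htN
      have h3 := hIseg 0 t le_rfl htN ht
      rw [Metric.mem_ball, dist_eq_norm]
      nlinarith
    obtain ⟨K, hK⟩ := hF (x 0) (I N + 1)
    set c : ℝ → ℝ := fun t => max 0 (min t N) with hc
    have hcmono : Monotone c := fun s t hst =>
      max_le_max le_rfl (min_le_min hst le_rfl)
    have hc0 : ∀ t, 0 ≤ c t := fun t => le_max_left _ _
    have hcN : ∀ t, c t ≤ N := fun t => max_le hNnn (min_le_right _ _)
    set G : ℝ → ℝ := fun t => (K:ℝ) * I (c t) with hG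
    set H : ℝ → ℝ := fun t => G t - φ (c t) with hH
    have hGmono : Monotone G := fun s t hst =>
      mul_le_mul_of_nonneg_left
        (hImono (c s) (c t) (hc0 s) (hcN t) (hcmono hst)) K.coe_nonneg
    have hHmono : Monotone H := by
      intro s t hst
      have hcst := hcmono hst
      have hlip := hK.dist_le_mul (x (c t)) (hrange (c t) (hc0 t) (hcN t))
        (x (c s)) (hrange (c s) (hc0 s) (hcN s))
      rw [dist_eq_norm, dist_eq_norm] at hlip
      have hxb := hbd (c s) (c t) (hc0 s) (hcN t) hcst
      have hseg := hIseg (c s) (c t) (hc0 s) (hcN t) hcst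
      have hxb' := mul_le_mul_of_nonneg_left hxb K.coe_nonneg
      have hstep : φ (c t) - φ (c s) ≤ (K:ℝ) * ‖x (c t) - x (c s)‖ :=
        le_trans (le_abs_self _) (by rwa [← Real.dist_eq])
      have hsegK : (K:ℝ) * (I (c t) - I (c s)) = (K:ℝ) * ∫ τ in c s..c t, ‖deriv x τ‖ := by
        rw [hseg]
      ring_nf at hsegK
      have goal' : (K:ℝ) * I (c s) - φ (c s) ≤ (K:ℝ) * I (c t) - φ (c t) := by
        linarith [hstep, hxb', hsegK]
      simpa [hH, hG] using goal'
    have hGd := hGmono.ae_differentiableAt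
    have hHd := hHmono.ae_differentiableAt
    filter_upwards [hGd, hHd] with t hGt hHt ht
    have hdiffc : DifferentiableAt ℝ (fun τ => φ (c τ)) t := by
      have h4 : (fun τ => φ (c τ)) = fun τ => G τ - H τ := by
        funext τ; simp only [hH]; ring
      rw [h4]
      exact hGt.sub hHt
    have hev : (fun τ => φ (c τ)) =ᶠ[nhds t] φ := by
      filter_upwards [isOpen_Ioo.mem_nhds ht] with τ hτ
      have h1 : min τ (N:ℝ) = τ := min_eq_left hτ.2.le
      have h2 : max 0 τ = τ := max_eq_right hτ.1.le
      simp only [hc, h1, h2]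
    exact (Filter.EventuallyEq.differentiableAt_iff hev).1 hdiffc
  have hall := ae_all_iff.2 good
  filter_upwards [hall] with t ht htpos
  obtain ⟨N, hN⟩ := exists_nat_gt t
  exact ht N ⟨htpos, hN⟩

theorem hasDerivAt_comp_subdiff {F : E → ℝ} {x : ℝ → E} {t : ℝ} {g p : E}
    (hφ : DifferentiableAt ℝ (fun τ => F (x τ)) t) (hx : HasDerivAt x p t)
    (hg : ∀ y : E, F (x t) + (inner ℝ g (y - x t) : ℝ) ≤ F y) :
    HasDerivAt (fun τ => F (x τ)) (inner ℝ g p : ℝ) t := by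
  set φ : ℝ → ℝ := fun τ => F (x τ) with hφdef
  have hd : HasDerivAt φ (deriv φ t) t := hφ.hasDerivAt
  have hslope : Tendsto (slope φ t) (nhdsWithin t {t}ᶜ) (nhds (deriv φ t)) :=
    hasDerivAt_iff_tendsto_slope.1 hd
  have hslopex : Tendsto (slope x t) (nhdsWithin t {t}ᶜ) (nhds p) :=
    hasDerivAt_iff_tendsto_slope.1 hx
  have hψ : Tendsto (fun y => (inner ℝ g (slope x t y) : ℝ)) (nhdsWithin t {t}ᶜ)
      (nhds (inner ℝ g p : ℝ)) :=
    Filter.Tendsto.inner tendsto_const_nhds hslopex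
  have hsub : ∀ y : ℝ, (inner ℝ g (x y - x t) : ℝ) ≤ φ y - φ t := by
    intro y
    have := hg (x y)
    simp only [hφdef]
    linarith
  have hIoi : nhdsWithin t (Set.Ioi t) ≤ nhdsWithin t {t}ᶜ :=
    nhdsWithin_mono t (fun y hy => LT.lt.ne' hy)
  have hIio : nhdsWithin t (Set.Iio t) ≤ nhdsWithin t {t}ᶜ :=
    nhdsWithin_mono t (fun y hy => LT.lt.ne hy)
  have key1 : (inner ℝ g p : ℝ) ≤ deriv φ t := by
    refine le_of_tendsto_of_tendsto (hψ.mono_left hIoi) (hslope.mono_left hIoi) ?_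
    filter_upwards [eventually_mem_nhdsWithin] with y (hy : y ∈ Set.Ioi t)
    have hyt : (0:ℝ) < y - t := sub_pos.2 hy
    have h1 : slope x t y = (y - t)⁻¹ • (x y - x t) := by
      rw [slope_def_module]
    have h2 : (inner ℝ g (slope x t y) : ℝ) = (y - t)⁻¹ * (inner ℝ g (x y - x t) : ℝ) := by
      rw [h1, real_inner_smul_right]
    have h3 : slope φ t y = (y - t)⁻¹ * (φ y - φ t) := by
      rw [slope_def_field]; field_simp
    rw [h2, h3]
    exact mul_le_mul_of_nonneg_left (hsub y) (by positivity)
  have key2 : deriv φ t ≤ (inner ℝ g p : ℝ) := by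
    refine le_of_tendsto_of_tendsto (hslope.mono_left hIio) (hψ.mono_left hIio) ?_
    filter_upwards [eventually_mem_nhdsWithin] with y (hy : y ∈ Set.Iio t)
    have hyt : y - t < 0 := sub_neg.2 hy
    have h1 : slope x t y = (y - t)⁻¹ • (x y - x t) := by
      rw [slope_def_module]
    have h2 : (inner ℝ g (slope x t y) : ℝ) = (y - t)⁻¹ * (inner ℝ g (x y - x t) : ℝ) := by
      rw [h1, real_inner_smul_right]
    have h3 : slope φ t y = (y - t)⁻¹ * (φ y - φ t) := by
      rw [slope_def_field]; field_simp
    rw [h2, h3]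
    have hinv : (y - t)⁻¹ ≤ 0 := inv_nonpos.2 hyt.le
    exact mul_le_mul_of_nonpos_left (hsub y) hinv
  have heq : deriv φ t = (inner ℝ g p : ℝ) := le_antisymm key2 key1
  rw [← heq]
  exact hd

end AEDiff

set_option maxHeartbeats 4000000 in
/-- there is a symmetric positive definite Q with
d/dt V*(x(t), λ(t)) ≤ −k‖ẋ(t)‖² − ⟨λ̇(t), Qλ̇(t)⟩ ≤ 0 a.e. -/
theorem stmt8
    (n q : ℕ) (hn : 2 ≤ n) (hq : 1 ≤ q) (α : ℝ) (hα : 0 < α)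
    (a : Fin n → Fin n → ℝ)
    (hsymm : ∀ i j, a i j = a j i) (hnn : ∀ i j, 0 ≤ a i j) (hdiag : ∀ i, a i i = 0)
    (hconn : (SimpleGraph.fromRel fun i j => 0 < a i j).Connected)
    (f : Fin n → EuclideanSpace ℝ (Fin q) → ℝ)
    (hfconv : ∀ i, ConvexOn ℝ Set.univ (f i)) (hfcont : ∀ i, Continuous (f i))
    (Ω : Fin n → Set (EuclideanSpace ℝ (Fin q)))
    (hΩne : ∀ i, (Ω i).Nonempty) (hΩcl : ∀ i, IsClosed (Ω i)) (hΩcv : ∀ i, Convex ℝ (Ω i))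
    (hint : (⋂ i, interior (Ω i)).Nonempty)
    (x lam : ℝ → EuclideanSpace ℝ (Fin n × Fin q))
    (hxac : LocAC x) (hlamac : LocAC lam)
    (hxΩ : ∀ t : ℝ, 0 ≤ t → x t ∈ prodSet n q Ω)
    (hdyn : ∀ᵐ t ∂(volume.restrict (Set.Ici (0:ℝ))),
      (∃ g ∈ subdiff (bigF n q f) (x t),
        IsProjOn (tangentCone (prodSet n q Ω) (x t))
          (-(α • Lmap n q a (x t)) - α • Lmap n q a (lam t) - g) (deriv x t)) ∧
      deriv lam t = α • Lmap n q a (x t))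
    (xs lams : EuclideanSpace ℝ (Fin n × Fin q))
    (hxsΩ : xs ∈ prodSet n q Ω) (hLxs : Lmap n q a xs = 0)
    (hopt : ∃ gs ∈ subdiff (bigF n q f) xs,
      -gs - α • Lmap n q a lams ∈ normalCone (prodSet n q Ω) xs)
    (μ : ℝ)
    (hμeig : ∃ v : Fin n → ℝ, v ≠ 0 ∧ (lap n a).mulVec v = μ • v)
    (hμmax : ∀ μ' : ℝ, (∃ v : Fin n → ℝ, v ≠ 0 ∧ (lap n a).mulVec v = μ' • v) → μ' ≤ μ)
    (k : ℝ) (hk0 : 0 < k) (hk1 : k < 1 / (α * μ))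
    :
    ∃ Q : Matrix (Fin n × Fin q) (Fin n × Fin q) ℝ, Q.IsSymm ∧ Q.PosDef ∧
      ∀ᵐ t ∂(volume.restrict (Set.Ici (0:ℝ))),
        DifferentiableAt ℝ
          (fun τ => V1aux xs lams (x τ) (lam τ) + k * V2aux n q α a f xs (x τ) (lam τ)) t ∧
        deriv (fun τ => V1aux xs lams (x τ) (lam τ) + k * V2aux n q α a f xs (x τ) (lam τ)) t ≤
          -(k * ‖deriv x t‖^2) -
            (inner ℝ (deriv lam t) (Matrix.toEuclideanLin Q (deriv lam t)) : ℝ) ∧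
        -(k * ‖deriv x t‖^2) -
            (inner ℝ (deriv lam t) (Matrix.toEuclideanLin Q (deriv lam t)) : ℝ) ≤ 0 := by
  classical
  have hsymL : ∀ u v : EuclideanSpace ℝ (Fin n × Fin q),
      (inner ℝ (Lmap n q a u) v : ℝ) = inner ℝ u (Lmap n q a v) :=
    fun u v => Lmap_isSymmetric hsymm u v
  -- μ is positive
  have hones : (lap n a).mulVec (fun _ => (1:ℝ)) = (0:ℝ) • (fun _ => (1:ℝ)) := by
    funext i; rw [lap_mulVec hdiag]; simp
  have hne1 : (fun _ : Fin n => (1:ℝ)) ≠ 0 := by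
    intro h
    exact one_ne_zero (congrFun h ⟨0, by omega⟩)
  have hμ0 : 0 ≤ μ := hμmax 0 ⟨_, hne1, hones⟩
  have hμpos : 0 < μ := by
    rcases eq_or_lt_of_le hμ0 with h | h
    · exfalso
      rw [← h, mul_zero] at hk1
      simp at hk1
      linarith
    · exact h
  have hαμ : 0 < α * μ := mul_pos hα hμpos
  set c : ℝ := 1/(α*μ) - k with hcdef
  have hcpos : 0 < c := by rw [hcdef]; linarith
  refine ⟨Matrix.diagonal (fun _ => c), Matrix.isSymm_diagonal _,
    Matrix.PosDef.diagonal (fun _ => hcpos), ?_⟩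
  have hQform : ∀ l : EuclideanSpace ℝ (Fin n × Fin q),
      (inner ℝ l (Matrix.toEuclideanLin (Matrix.diagonal (fun _ : Fin n × Fin q => c)) l) : ℝ)
        = c * ‖l‖^2 := by
    intro l
    have happ : Matrix.toEuclideanLin (Matrix.diagonal (fun _ : Fin n × Fin q => c)) l
        = c • l := by
      ext pp
      rw [Matrix.toEuclideanLin_apply]
      show (Matrix.diagonal (fun _ : Fin n × Fin q => c)).mulVec _ pp = _
      rw [Matrix.mulVec_diagonal]
      rfl
    rw [happ, real_inner_smul_right, real_inner_self_eq_norm_sq]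
  have hprodconv : Convex ℝ (prodSet n q Ω) := by
    intro u hu v hv s r hs hr hsr i
    exact hΩcv i (hu i) (hv i) hs hr hsr
  have hφae := comp_ae_differentiable (bigF n q f)
    (fun x₀ R => bigF_exists_lipschitz hfconv hfcont x₀ R) x hxac.2.1 hxac.2.2
  have hne0 : ∀ᵐ t ∂(volume.restrict (Set.Ici (0:ℝ))), t ≠ 0 := by
    apply ae_restrict_of_ae
    rw [ae_iff]
    have hset : {t : ℝ | ¬ t ≠ 0} = {0} := by ext; simp
    rw [hset]
    exact Real.volume_singleton
  filter_upwards [hdyn, hxac.1, hlamac.1, ae_restrict_mem measurableSet_Ici,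
      ae_restrict_of_ae hφae, hne0] with t hdynt hxdiff hlamdiff htmem hφdiff htne
  obtain ⟨⟨g, hgsub, hproj⟩, hlderiv⟩ := hdynt
  have htpos : (0:ℝ) < t := lt_of_le_of_ne htmem (Ne.symm htne)
  set X := x t with hX
  set Λ := lam t with hΛ
  set p := deriv x t with hp
  set l := deriv lam t with hldef
  have hlX : l = α • Lmap n q a X := hlderiv
  have hXd : HasDerivAt x p t := hxdiff.hasDerivAt
  have hΛd : HasDerivAt lam l t := hlamdiff.hasDerivAt
  have hφd : HasDerivAt (fun τ => bigF n q f (x τ)) (inner ℝ g p : ℝ) t :=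
    hasDerivAt_comp_subdiff (hφdiff htpos) hXd hgsub
  have hLX : HasDerivAt (fun τ => Lmap n q a (x τ)) (Lmap n q a p) t := by
    have h : HasDerivAt (⇑(LinearMap.toContinuousLinearMap (Lmap n q a)) ∘ x)
        ((LinearMap.toContinuousLinearMap (Lmap n q a)) p) t :=
      ((LinearMap.toContinuousLinearMap (Lmap n q a)).hasFDerivAt).comp_hasDerivAt t hXd
    exact h
  have hLΛ : HasDerivAt (fun τ => Lmap n q a (lam τ)) (Lmap n q a l) t := by
    have h : HasDerivAt (⇑(LinearMap.toContinuousLinearMap (Lmap n q a)) ∘ lam)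
        ((LinearMap.toContinuousLinearMap (Lmap n q a)) l) t :=
      ((LinearMap.toContinuousLinearMap (Lmap n q a)).hasFDerivAt).comp_hasDerivAt t hΛd
    exact h
  have hV1x : HasDerivAt (fun τ => (1/2:ℝ) * ‖x τ - xs‖^2) ((inner ℝ (X - xs) p : ℝ)) t := by
    have h := HasDerivAt.const_mul (1/2:ℝ)
      (HasDerivAt.inner ℝ (hXd.sub_const xs) (hXd.sub_const xs))
    have heq : (fun τ => (1/2:ℝ) * (inner ℝ (x τ - xs) (x τ - xs) : ℝ))
        = fun τ => (1/2:ℝ) * ‖x τ - xs‖^2 := by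
      funext τ; rw [real_inner_self_eq_norm_sq]
    rw [heq] at h
    refine h.congr_deriv ?_
    rw [real_inner_comm p (X - xs)]
    ring
  have hV1l : HasDerivAt (fun τ => (1/2:ℝ) * ‖lam τ - lams‖^2) ((inner ℝ (Λ - lams) l : ℝ)) t := by
    have h := HasDerivAt.const_mul (1/2:ℝ)
      (HasDerivAt.inner ℝ (hΛd.sub_const lams) (hΛd.sub_const lams))
    have heq : (fun τ => (1/2:ℝ) * (inner ℝ (lam τ - lams) (lam τ - lams) : ℝ))
        = fun τ => (1/2:ℝ) * ‖lam τ - lams‖^2 := by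
      funext τ; rw [real_inner_self_eq_norm_sq]
    rw [heq] at h
    refine h.congr_deriv ?_
    rw [real_inner_comm l (Λ - lams)]
    ring
  have h2 : HasDerivAt (fun τ => (inner ℝ (x τ) (Lmap n q a (x τ)) : ℝ))
      ((inner ℝ X (Lmap n q a p) : ℝ) + (inner ℝ p (Lmap n q a X) : ℝ)) t :=
    HasDerivAt.inner ℝ hXd hLX
  have h3 : HasDerivAt (fun τ => (inner ℝ (x τ) (Lmap n q a (lam τ)) : ℝ))
      ((inner ℝ X (Lmap n q a l) : ℝ) + (inner ℝ p (Lmap n q a Λ) : ℝ)) t :=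
    HasDerivAt.inner ℝ hXd hLΛ
  have hV2 : HasDerivAt (fun τ => bigF n q f (x τ) - bigF n q f xs
      + (α/2) * (inner ℝ (x τ) (Lmap n q a (x τ)) : ℝ)
      + α * (inner ℝ (x τ) (Lmap n q a (lam τ)) : ℝ))
      ((inner ℝ g p : ℝ)
        + (α/2) * ((inner ℝ X (Lmap n q a p) : ℝ) + (inner ℝ p (Lmap n q a X) : ℝ))
        + α * ((inner ℝ X (Lmap n q a l) : ℝ) + (inner ℝ p (Lmap n q a Λ) : ℝ))) t :=
    ((hφd.sub_const _).add (HasDerivAt.const_mul (α/2) h2)).add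
      (HasDerivAt.const_mul α h3)
  have hAll : HasDerivAt
      (fun τ => V1aux xs lams (x τ) (lam τ) + k * V2aux n q α a f xs (x τ) (lam τ))
      (((inner ℝ (X - xs) p : ℝ) + (inner ℝ (Λ - lams) l : ℝ))
        + k * ((inner ℝ g p : ℝ)
          + (α/2) * ((inner ℝ X (Lmap n q a p) : ℝ) + (inner ℝ p (Lmap n q a X) : ℝ))
          + α * ((inner ℝ X (Lmap n q a l) : ℝ) + (inner ℝ p (Lmap n q a Λ) : ℝ)))) t :=
    (hV1x.add hV1l).add (HasDerivAt.const_mul k hV2)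
  refine ⟨hAll.differentiableAt, ?_, ?_⟩
  · rw [hAll.deriv, hQform l]
    -- scalar estimates
    have hXΩ : X ∈ prodSet n q Ω := hxΩ t htmem
    obtain ⟨hMoreau, hVI⟩ := isProjOn_tangentCone_facts hprodconv hXΩ hproj
    have hVIxs := hVI _ (sub_mem_tangentCone hxsΩ)
    set u0 := -(α • Lmap n q a X) - α • Lmap n q a Λ - g with hu0
    -- Moreau
    have e1 : (inner ℝ u0 p : ℝ) = ‖p‖^2 := by
      have h := hMoreau
      rw [inner_sub_left] at h
      have h2' : (inner ℝ p p : ℝ) = ‖p‖^2 := real_inner_self_eq_norm_sq _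
      linarith
    have e2 : (inner ℝ u0 p : ℝ) = -(α * (inner ℝ (Lmap n q a X) p : ℝ))
        - α * (inner ℝ (Lmap n q a Λ) p : ℝ) - (inner ℝ g p : ℝ) := by
      rw [hu0, inner_sub_left, inner_sub_left, inner_neg_left,
        real_inner_smul_left, real_inner_smul_left]
    have e12 : ‖p‖^2 = -(α * (inner ℝ (Lmap n q a X) p : ℝ))
        - α * (inner ℝ (Lmap n q a Λ) p : ℝ) - (inner ℝ g p : ℝ) := by
      rw [← e1, e2]
    -- symmetry conversions
    have c1 : (inner ℝ X (Lmap n q a p) : ℝ) = inner ℝ (Lmap n q a X) p := (hsymL X p).symm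
    have c1' : (inner ℝ p (Lmap n q a X) : ℝ) = inner ℝ (Lmap n q a X) p := real_inner_comm _ _
    have c2' : (inner ℝ p (Lmap n q a Λ) : ℝ) = inner ℝ (Lmap n q a Λ) p := real_inner_comm _ _
    have c2 : α * (inner ℝ X (Lmap n q a l) : ℝ) = ‖l‖^2 := by
      have h1 : (inner ℝ X (Lmap n q a l) : ℝ) = inner ℝ (Lmap n q a X) l := (hsymL X l).symm
      rw [h1, hlX, real_inner_smul_right, norm_smul, mul_pow, Real.norm_eq_abs, sq_abs,
        real_inner_self_eq_norm_sq]
      ring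
    have cineq : ‖l‖^2 ≤ α^2 * μ * (inner ℝ X (Lmap n q a X) : ℝ) := by
      have h := Lmap_eig_le hsymm hnn hdiag hμmax X
      have h2' : ‖l‖^2 = α^2 * (inner ℝ (Lmap n q a X) (Lmap n q a X) : ℝ) := by
        rw [hlX, norm_smul, mul_pow, Real.norm_eq_abs, sq_abs, real_inner_self_eq_norm_sq]
      calc ‖l‖^2 = α^2 * (inner ℝ (Lmap n q a X) (Lmap n q a X) : ℝ) := h2'
        _ ≤ α^2 * (μ * (inner ℝ X (Lmap n q a X) : ℝ)) :=
            mul_le_mul_of_nonneg_left h (sq_nonneg α)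
        _ = α^2 * μ * (inner ℝ X (Lmap n q a X) : ℝ) := by ring
    -- zero facts via L xs = 0
    have z1 : (inner ℝ xs (Lmap n q a X) : ℝ) = 0 := by
      rw [← hsymL xs X, hLxs, inner_zero_left]
    have z2 : (inner ℝ xs (Lmap n q a Λ) : ℝ) = 0 := by
      rw [← hsymL xs Λ, hLxs, inner_zero_left]
    have z3 : (inner ℝ X (Lmap n q a Λ) : ℝ) = inner ℝ Λ (Lmap n q a X) := by
      rw [← hsymL X Λ, real_inner_comm]
    -- VI inequality
    have c5 : (inner ℝ (X - xs) p : ℝ) ≤ (inner ℝ (X - xs) u0 : ℝ) := by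
      have h := hVIxs
      simp only [inner_sub_left, inner_sub_right] at h ⊢
      linarith [real_inner_comm X p, real_inner_comm xs p,
        real_inner_comm X u0, real_inner_comm xs u0]
    -- expansion of ⟪X - xs, u0⟫
    have q2 : (inner ℝ (X - xs) u0 : ℝ)
        = -(α * (inner ℝ X (Lmap n q a X) : ℝ)) - α * (inner ℝ Λ (Lmap n q a X) : ℝ)
          + (inner ℝ g (xs - X) : ℝ) := by
      rw [hu0, inner_sub_right, inner_sub_right, inner_neg_right,
        real_inner_smul_right, real_inner_smul_right]
      rw [inner_sub_left, inner_sub_left]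
      rw [z1, z2, z3]
      have hgc : (inner ℝ (X - xs) g : ℝ) = -(inner ℝ g (xs - X) : ℝ) := by
        rw [real_inner_comm, inner_sub_right]
        rw [inner_sub_right]
        ring
      linarith [hgc]
    -- lambda term
    have q3 : (inner ℝ (Λ - lams) l : ℝ)
        = α * (inner ℝ Λ (Lmap n q a X) : ℝ) - α * (inner ℝ lams (Lmap n q a X) : ℝ) := by
      rw [hlX, real_inner_smul_right, inner_sub_left]
      ring
    -- subgradient at X
    have q4 : (inner ℝ g (xs - X) : ℝ) ≤ bigF n q f xs - bigF n q f X := by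
      have := hgsub xs
      linarith
    -- optimality conditions
    obtain ⟨gs, hgs, hnc⟩ := hopt
    have q5 : bigF n q f xs - bigF n q f X ≤ -(inner ℝ gs (X - xs) : ℝ) := by
      have := hgs X
      linarith
    have q6 : -(inner ℝ gs (X - xs) : ℝ) ≤ α * (inner ℝ lams (Lmap n q a X) : ℝ) := by
      have h := hnc X hXΩ
      rw [inner_sub_left, inner_neg_left, real_inner_smul_left] at h
      have z4 : (inner ℝ (Lmap n q a lams) (X - xs) : ℝ) = inner ℝ lams (Lmap n q a X) := by
        rw [hsymL lams (X - xs), map_sub, hLxs, sub_zero]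
      rw [z4] at h
      linarith
    -- step 1 : first bracket
    have step1 : (inner ℝ (X - xs) p : ℝ) + (inner ℝ (Λ - lams) l : ℝ)
        ≤ -(α * (inner ℝ X (Lmap n q a X) : ℝ)) := by
      linarith [c5, q2, q3, q4, q5, q6]
    -- step 2 : k-bracket
    have step2 : (inner ℝ g p : ℝ)
        + (α/2) * ((inner ℝ X (Lmap n q a p) : ℝ) + (inner ℝ p (Lmap n q a X) : ℝ))
        + α * ((inner ℝ X (Lmap n q a l) : ℝ) + (inner ℝ p (Lmap n q a Λ) : ℝ))
        = ‖l‖^2 - ‖p‖^2 := by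
      rw [c1, c1', c2']
      nlinarith [c2, e12]
    -- step 4 : spectral bound
    have step4 : (1/(α*μ)) * ‖l‖^2 ≤ α * (inner ℝ X (Lmap n q a X) : ℝ) := by
      have hpos : (0:ℝ) ≤ 1/(α*μ) := by positivity
      have h := mul_le_mul_of_nonneg_left cineq hpos
      have hsimp : (1/(α*μ)) * (α^2 * μ * (inner ℝ X (Lmap n q a X) : ℝ))
          = α * (inner ℝ X (Lmap n q a X) : ℝ) := by
        field_simp
      rw [hsimp] at h
      exact h
    have hcnl : c * ‖l‖^2 = (1/(α*μ)) * ‖l‖^2 - k * ‖l‖^2 := by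
      rw [hcdef]; ring
    rw [step2]
    calc (inner ℝ (X - xs) p : ℝ) + (inner ℝ (Λ - lams) l : ℝ) + k * (‖l‖^2 - ‖p‖^2)
        ≤ -(α * (inner ℝ X (Lmap n q a X) : ℝ)) + k * (‖l‖^2 - ‖p‖^2) := by linarith [step1]
      _ ≤ -((1/(α*μ)) * ‖l‖^2) + k * (‖l‖^2 - ‖p‖^2) := by linarith [step4]
      _ = -(k * ‖p‖^2) - ((1/(α*μ)) * ‖l‖^2 - k * ‖l‖^2) := by ring
      _ = -(k * ‖p‖^2) - c * ‖l‖^2 := by rw [hcnl]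
  · have h1 : 0 ≤ k * ‖p‖^2 := mul_nonneg hk0.le (sq_nonneg _)
    rw [hQform l]
    have h2' : 0 ≤ c * ‖l‖^2 := mul_nonneg hcpos.le (sq_nonneg _)
    linarith

end
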